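/- Inviting exactly the set V_max achieves the maximum acceptance probability: f(V_max) = f(V) = p_max. -/
import Mathlib


open Finset MeasureTheory

/-- A social network with weights, an initiator `s`, and a target user `t ∉ N_s`. -/
structure FriendNet (V : Type) [Fintype V] [DecidableEq V] where
  G : SimpleGraph V
  adjDec : DecidableRel G.Adj
  w : V → V → ℝ
  w_pos : ∀ u v : V, G.Adj u v → 0 < w u v
  w_le_one : ∀ u v : V, G.Adj u v → w u v ≤ 1
  w_eq_zero : ∀ u v : V, ¬ G.Adj u v → w u v = 0
  w_sum_le_one : ∀ v : V, ∑ u : V, w u v ≤ 1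
  s : V
  t : V
  t_ne_s : t ≠ s
  t_not_friend : ¬ G.Adj s t

variable {V : Type} [Fintype V] [DecidableEq V]

namespace FriendNet

/-- The current friends (neighbors) `N_v` of a user `v`. -/
def Nbr (net : FriendNet V) (v : V) : Finset V :=
  letI := net.adjDec
  Finset.univ.filter fun u => net.G.Adj u v

/-- `Φ(C)`: users not in `C` willing to accept an invitation, given thresholds `θ`. -/
noncomputable def Phi (net : FriendNet V) (θ : V → ℝ) (C : Finset V) : Finset V :=
  Finset.univ.filter fun u => u ∉ C ∧ θ u ≤ ∑ v ∈ C, net.w v u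

/-- One round of the friending process: `C ∪ (Φ(C) ∩ I)`. -/
noncomputable def Cstep (net : FriendNet V) (θ : V → ℝ) (I : Finset V) (C : Finset V) : Finset V :=
  C ∪ (net.Phi θ C ∩ I)

/-- `C_∞(I)`: the final set of the threshold friending process (it stabilizes after
`|V|` rounds). -/
noncomputable def Cinf (net : FriendNet V) (θ : V → ℝ) (I : Finset V) : Finset V :=
  (net.Cstep θ I)^[Fintype.card V] (net.Nbr net.s)

/-- The distribution of the thresholds: i.i.d. uniform on `[0,1]`. -/
noncomputable def thetaMeasure (V : Type) [Fintype V] : Measure (V → ℝ) :=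
  Measure.pi fun _ => volume.restrict (Set.Icc (0 : ℝ) 1)

/-- The acceptance probability `f(I)`: probability over the thresholds that `t ∈ C_∞(I)`. -/
noncomputable def f (net : FriendNet V) (I : Finset V) : ℝ :=
  (thetaMeasure V {θ : V → ℝ | net.t ∈ net.Cinf θ I}).toReal

/-- `p_max`: the maximum acceptance probability over all invitation sets. -/
noncomputable def pmax (net : FriendNet V) : ℝ := ⨆ I : Finset V, net.f I

/-- A realization: each user selects at most one current friend (`none` plays ℵ0). -/
def IsRealization (net : FriendNet V) (g : V → Option V) : Prop :=
  ∀ v u : V, g v = some u → net.G.Adj u v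

/-- `Pr[g]`, the probability of generating the realization `g`. -/
noncomputable def realWeight (net : FriendNet V) (g : V → Option V) : ℝ :=
  ∏ v : V, (g v).elim (1 - ∑ u : V, net.w u v) (fun u => net.w u v)

/-- `Ψ(H)` for a realization `g`. -/
def Psi (g : V → Option V) (H : Finset V) : Finset V :=
  Finset.univ.filter fun v => v ∉ H ∧ ∃ u ∈ H, g v = some u

/-- One round of Process 2: `H ∪ (Ψ(H) ∩ I)`. -/
def Hstep (g : V → Option V) (I : Finset V) (H : Finset V) : Finset V :=
  H ∪ (Psi g H ∩ I)

/-- `H_∞(g, I)`: the final set of Process 2 (it stabilizes after `|V|` rounds). -/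
def Hinf (net : FriendNet V) (g : V → Option V) (I : Finset V) : Finset V :=
  (Hstep g I)^[Fintype.card V] (net.Nbr net.s)

end FriendNet

/-- The loop of Algorithm 1 (backward trace), with fuel. `none` plays ℵ0. -/
def traceAux (g : V → Option V) (Ns : Finset V) : ℕ → V → Finset (Option V) → Finset (Option V)
  | 0, _, acc => acc
  | m + 1, u, acc =>
    match g u with
    | none => insert none acc
    | some v =>
      if some v ∈ acc then insert none acc
      else if v ∈ Ns then acc
      else traceAux g Ns m v (insert (some v) acc)

namespace FriendNet

/-- The backward trace `t(g)` computed by Algorithm 1. -/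
def trace (net : FriendNet V) (g : V → Option V) : Finset (Option V) :=
  traceAux g (net.Nbr net.s) (Fintype.card V + 1) net.t {some net.t}

/-- `f(g, I)`: the indicator that `I` covers `g`, i.e. `t(g) ⊆ I`. -/
noncomputable def fg (net : FriendNet V) (g : V → Option V) (I : Finset V) : ℝ :=
  if net.trace g ⊆ I.image some then 1 else 0

/-- `F(B_l, I) = Σ_{g ∈ B_l} f(g, I)`. -/
noncomputable def F (net : FriendNet V) {l : ℕ} (B : Fin l → V → Option V)
    (I : Finset V) : ℝ :=
  ∑ i : Fin l, net.fg (B i) I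

end FriendNet

instance : MeasurableSpace (V → Option V) := ⊤

/-- The distribution of a random realization `ĝ`. -/
noncomputable def FriendNet.realMeasure (net : FriendNet V) : Measure (V → Option V) :=
  ∑ g : V → Option V, ENNReal.ofReal (net.realWeight g) • Measure.dirac g

open Classical in
/-- `V_max`: users outside `{s} ∪ N_s` lying on some path from `{s} ∪ N_s` to `t`. -/
noncomputable def FriendNet.Vmax (net : FriendNet V) : Finset V :=
  Finset.univ.filter fun u =>
    u ∉ insert net.s (net.Nbr net.s) ∧
      ∃ v ∈ insert net.s (net.Nbr net.s),
        ∃ p : net.G.Walk v net.t, p.IsPath ∧ u ∈ p.support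


open Finset MeasureTheory

variable {V : Type} [Fintype V] [DecidableEq V]

private lemma chain'_stp_nodup {α : Type*} (g : α → ℕ) {l : List α}
    (h : List.Chain' (fun a b => g a < g b) l) : l.Nodup := by
  haveI : IsTrans α (fun a b => g a < g b) := ⟨fun a b c => Nat.lt_trans⟩
  have hp := List.isChain_iff_pairwise.mp h
  exact hp.imp fun {a b} hlt => by rintro rfl; exact lt_irrefl _ hlt

private lemma iterate_le_of_le {g : Finset V → Finset V} (hg : ∀ C, C ⊆ g C) (x : Finset V)
    {m n : ℕ} (h : m ≤ n) : g^[m] x ⊆ g^[n] x := by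
  induction h with
  | refl => exact subset_rfl
  | step _ ih =>
    rename_i k _
    refine ih.trans ?_
    rw [Function.iterate_succ_apply']
    exact hg _

private lemma iterate_fixed {g : Finset V → Finset V} (hg : ∀ C, C ⊆ g C) (x : Finset V) :
    g (g^[Fintype.card V] x) = g^[Fintype.card V] x := by
  have key : ∃ j, j ≤ Fintype.card V ∧ g (g^[j] x) = g^[j] x := by
    by_contra hcon
    push_neg at hcon
    have grow : ∀ i, i ≤ Fintype.card V + 1 → i ≤ (g^[i] x).card := by
      intro i
      induction i with
      | zero => intro _; exact Nat.zero_le _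
      | succ i ih =>
        intro hi
        have h1 : g^[i] x ⊂ g^[i + 1] x := by
          rw [Function.iterate_succ_apply']
          exact (hg _).ssubset_of_ne fun h => hcon i (by omega) h.symm
        have h2 := Finset.card_lt_card h1
        have h3 := ih (by omega)
        omega
    have h4 := grow (Fintype.card V + 1) le_rfl
    have h5 : (g^[Fintype.card V + 1] x).card ≤ Fintype.card V := by
      have := Finset.card_le_univ (g^[Fintype.card V + 1] x)
      simpa using this
    omega
  obtain ⟨j, hj, hfix⟩ := key
  obtain ⟨m, hm⟩ := Nat.exists_eq_add_of_le hj
  have hall : ∀ m, g^[j + m] x = g^[j] x := by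
    intro m
    induction m with
    | zero => rfl
    | succ m ih =>
      have : j + (m + 1) = (j + m) + 1 := by omega
      rw [this, Function.iterate_succ_apply', ih, hfix]
  rw [hm, hall m, hfix]

namespace FriendNet

lemma w_nonneg (net : FriendNet V) (u v : V) : 0 ≤ net.w u v := by
  by_cases h : net.G.Adj u v
  · exact (net.w_pos u v h).le
  · rw [net.w_eq_zero u v h]

lemma mem_Nbr (net : FriendNet V) {u v : V} : u ∈ net.Nbr v ↔ net.G.Adj u v := by
  letI := net.adjDec
  simp [Nbr]

lemma subset_Cstep (net : FriendNet V) (θ : V → ℝ) (I C : Finset V) :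
    C ⊆ net.Cstep θ I C := Finset.subset_union_left

lemma Cstep_mono (net : FriendNet V) (θ : V → ℝ) {I I' C C' : Finset V}
    (hI : I ⊆ I') (hC : C ⊆ C') : net.Cstep θ I C ⊆ net.Cstep θ I' C' := by
  intro x hx
  rcases Finset.mem_union.1 hx with h | h
  · exact Finset.mem_union_left _ (hC h)
  · rcases Finset.mem_inter.1 h with ⟨h1, h2⟩
    by_cases hx' : x ∈ C'
    · exact Finset.mem_union_left _ hx'
    · refine Finset.mem_union_right _ (Finset.mem_inter.2 ⟨?_, hI h2⟩)
      rw [Phi, Finset.mem_filter] at h1 ⊢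
      refine ⟨Finset.mem_univ _, hx', le_trans h1.2.2 ?_⟩
      exact Finset.sum_le_sum_of_subset_of_nonneg hC fun i _ _ => net.w_nonneg i x

lemma Cinf_mono (net : FriendNet V) (θ : V → ℝ) {I I' : Finset V} (h : I ⊆ I') :
    net.Cinf θ I ⊆ net.Cinf θ I' := by
  suffices H : ∀ n, (net.Cstep θ I)^[n] (net.Nbr net.s) ⊆ (net.Cstep θ I')^[n] (net.Nbr net.s)
    from H _
  intro n
  induction n with
  | zero => exact subset_rfl
  | succ n ih =>
    rw [Function.iterate_succ_apply', Function.iterate_succ_apply']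
    exact net.Cstep_mono θ h ih

/-- The stage sets of the full-invitation process. -/
noncomputable def Aseq (net : FriendNet V) (θ : V → ℝ) (i : ℕ) : Finset V :=
  (net.Cstep θ Finset.univ)^[i] (net.Nbr net.s)

/-- Activation step. -/
noncomputable def stp (net : FriendNet V) (θ : V → ℝ) (u : V) : ℕ :=
  sInf {i | u ∈ net.Aseq θ i}

lemma Aseq_mono (net : FriendNet V) (θ : V → ℝ) {m n : ℕ} (h : m ≤ n) :
    net.Aseq θ m ⊆ net.Aseq θ n :=
  iterate_le_of_le (net.subset_Cstep θ _) _ h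

lemma mem_Aseq_stp (net : FriendNet V) (θ : V → ℝ) {u : V} {i : ℕ} (hu : u ∈ net.Aseq θ i) :
    u ∈ net.Aseq θ (net.stp θ u) := by
  have h : sInf {i | u ∈ net.Aseq θ i} ∈ {i | u ∈ net.Aseq θ i} := Nat.sInf_mem ⟨i, hu⟩
  exact h

lemma stp_le (net : FriendNet V) (θ : V → ℝ) {u : V} {i : ℕ} (hu : u ∈ net.Aseq θ i) :
    net.stp θ u ≤ i :=
  Nat.sInf_le hu

/-- If an activated `u` is not an initial friend, at the step before its activation its
threshold was met. -/
lemma exists_pred (net : FriendNet V) (θ : V → ℝ) {u : V} {i : ℕ}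
    (hu : u ∈ net.Aseq θ i) (hns : u ∉ net.Nbr net.s) :
    ∃ j, j + 1 = net.stp θ u ∧ u ∉ net.Aseq θ j ∧ θ u ≤ ∑ v ∈ net.Aseq θ j, net.w v u := by
  have hmem := net.mem_Aseq_stp θ hu
  have hne : net.stp θ u ≠ 0 := by
    intro h
    rw [h] at hmem
    exact hns hmem
  obtain ⟨j, hj⟩ : ∃ j, net.stp θ u = j + 1 := ⟨net.stp θ u - 1, by omega⟩
  have hj' : sInf {i | u ∈ net.Aseq θ i} = j + 1 := hj
  have hnot : u ∉ net.Aseq θ j := by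
    have h : j ∉ {i | u ∈ net.Aseq θ i} := Nat.notMem_of_lt_sInf (by omega)
    exact h
  refine ⟨j, hj.symm, hnot, ?_⟩
  · rw [hj] at hmem
    have : net.Aseq θ (j + 1) = net.Cstep θ Finset.univ (net.Aseq θ j) := by
      rw [Aseq, Function.iterate_succ_apply']; rfl
    rw [this, Cstep] at hmem
    rcases Finset.mem_union.1 hmem with h | h
    · exact absurd h hnot
    · have h1 := (Finset.mem_inter.1 h).1
      rw [Phi, Finset.mem_filter] at h1
      exact h1.2.2

/-- Genealogy lemma: any activated vertex carrying a strictly-increasing chain walk to `t`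
lies on a simple path from `N_s` to `t` (containing everything on the chain). -/
lemma gen2 (net : FriendNet V) (θ : V → ℝ) (hθ : ∀ v, 0 < θ v) :
    ∀ k u, net.stp θ u ≤ k → (∃ i, u ∈ net.Aseq θ i) →
    ∀ q : net.G.Walk u net.t,
      List.Chain' (fun a b => net.stp θ a < net.stp θ b) q.support →
      ∃ y ∈ net.Nbr net.s, ∃ r : net.G.Walk y net.t, r.IsPath ∧
        ∀ z ∈ q.support, z ∈ r.support := by
  intro k
  induction k with
  | zero =>
    intro u hk hex q hq
    obtain ⟨i, hu⟩ := hex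
    have h0 : net.stp θ u = 0 := Nat.le_zero.1 hk
    have hmem := net.mem_Aseq_stp θ hu
    rw [h0] at hmem
    exact ⟨u, hmem, q, (SimpleGraph.Walk.isPath_def q).2 (chain'_stp_nodup (net.stp θ) hq),
      fun z hz => hz⟩
  | succ k ih =>
    intro u hk hex q hq
    obtain ⟨i, hu⟩ := hex
    by_cases hns : u ∈ net.Nbr net.s
    · exact ⟨u, hns, q, (SimpleGraph.Walk.isPath_def q).2 (chain'_stp_nodup (net.stp θ) hq),
        fun z hz => hz⟩
    · obtain ⟨j, hj, hnot, hsum⟩ := net.exists_pred θ hu hns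
      -- find a contributor
      have hex2 : ∃ v ∈ net.Aseq θ j, net.w v u ≠ 0 := by
        by_contra hcon
        push_neg at hcon
        have : (∑ v ∈ net.Aseq θ j, net.w v u) = 0 := Finset.sum_eq_zero hcon
        rw [this] at hsum
        exact absurd hsum (not_le.2 (hθ u))
      obtain ⟨v, hvA, hvw⟩ := hex2
      have hadj : net.G.Adj v u := by
        by_contra h
        exact hvw (net.w_eq_zero v u h)
      have hstpv : net.stp θ v ≤ j := net.stp_le θ hvA
      have hstpu : net.stp θ v < net.stp θ u := by omega
      set q' : net.G.Walk v net.t := SimpleGraph.Walk.cons hadj q with hq'def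
      have hq' : List.Chain' (fun a b => net.stp θ a < net.stp θ b) q'.support := by
        rw [hq'def, SimpleGraph.Walk.support_cons]
        refine List.isChain_cons.2 ⟨?_, hq⟩
        intro b hb
        rw [SimpleGraph.Walk.support_eq_cons q, List.head?_cons, Option.mem_some_iff] at hb
        rw [← hb]
        exact hstpu
      obtain ⟨y, hy, r, hr, hsub⟩ := ih v (by omega) ⟨j, hvA⟩ q' hq'
      refine ⟨y, hy, r, hr, fun z hz => hsub z ?_⟩
      rw [hq'def, SimpleGraph.Walk.support_cons]
      exact List.mem_cons_of_mem _ hz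

end FriendNet

namespace FriendNet

lemma Nbr_subset_Cinf (net : FriendNet V) (θ : V → ℝ) (I : Finset V) :
    net.Nbr net.s ⊆ net.Cinf θ I :=
  iterate_le_of_le (net.subset_Cstep θ I) _ (Nat.zero_le _)

lemma Cstep_Cinf (net : FriendNet V) (θ : V → ℝ) (I : Finset V) :
    net.Cstep θ I (net.Cinf θ I) = net.Cinf θ I :=
  iterate_fixed (fun C => Finset.subset_union_left) (net.Nbr net.s)

/-- Main induction: any activated vertex that carries a strictly-increasing chain walk
to `t` is activated by the `Vmax` process as well. -/
lemma main_lemma (net : FriendNet V) (θ : V → ℝ) (hθ : ∀ v, 0 < θ v) :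
    ∀ k u, net.stp θ u ≤ k → (∃ i, u ∈ net.Aseq θ i) → u ≠ net.s →
    ∀ q : net.G.Walk u net.t,
      List.Chain' (fun a b => net.stp θ a < net.stp θ b) q.support →
      u ∈ net.Cinf θ net.Vmax := by
  intro k
  induction k with
  | zero =>
    intro u hk hex _ _ _
    obtain ⟨i, hu⟩ := hex
    have hmem := net.mem_Aseq_stp θ hu
    rw [Nat.le_zero.1 hk] at hmem
    exact net.Nbr_subset_Cinf θ _ hmem
  | succ k ih =>
    intro u hk hex hus q hq
    obtain ⟨i, hu⟩ := hex
    by_cases hns : u ∈ net.Nbr net.s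
    · exact net.Nbr_subset_Cinf θ _ hns
    by_cases hD : u ∈ net.Cinf θ net.Vmax
    · exact hD
    obtain ⟨j, hj, hnot, hsum⟩ := net.exists_pred θ hu hns
    have hcontr : ∀ v ∈ (net.Aseq θ j).filter (fun v => net.w v u ≠ 0),
        v ∈ net.Cinf θ net.Vmax := by
      intro v hv
      rw [Finset.mem_filter] at hv
      obtain ⟨hvA, hvw⟩ := hv
      have hadj : net.G.Adj v u := by
        by_contra h
        exact hvw (net.w_eq_zero v u h)
      have hvs : v ≠ net.s := by
        rintro rfl
        exact hns (net.mem_Nbr.2 hadj.symm)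
      have hstpv : net.stp θ v ≤ j := net.stp_le θ hvA
      have hstpu : net.stp θ v < net.stp θ u := by omega
      set q' : net.G.Walk v net.t := SimpleGraph.Walk.cons hadj q with hq'def
      have hq' : List.Chain' (fun a b => net.stp θ a < net.stp θ b) q'.support := by
        rw [hq'def, SimpleGraph.Walk.support_cons]
        refine List.isChain_cons.2 ⟨?_, hq⟩
        intro b hb
        rw [SimpleGraph.Walk.support_eq_cons q, List.head?_cons, Option.mem_some_iff] at hb
        rw [← hb]
        exact hstpu
      exact ih v (by omega) ⟨j, hvA⟩ hvs q' hq'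
    have hsum2 : θ u ≤ ∑ v ∈ net.Cinf θ net.Vmax, net.w v u := by
      calc θ u ≤ ∑ v ∈ net.Aseq θ j, net.w v u := hsum
        _ = ∑ v ∈ (net.Aseq θ j).filter (fun v => net.w v u ≠ 0), net.w v u :=
            (Finset.sum_filter_ne_zero _).symm
        _ ≤ ∑ v ∈ net.Cinf θ net.Vmax, net.w v u :=
            Finset.sum_le_sum_of_subset_of_nonneg (fun v hv => hcontr v hv)
              (fun v _ _ => net.w_nonneg v u)
    have hvmax : u ∈ net.Vmax := by
      obtain ⟨y, hy, r, hr, hsub⟩ := net.gen2 θ hθ (net.stp θ u) u le_rfl ⟨i, hu⟩ q hq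
      have hur : u ∈ r.support := hsub u q.start_mem_support
      classical
      simp only [Vmax, Finset.mem_filter, Finset.mem_univ, true_and]
      constructor
      · intro hmem
        rcases Finset.mem_insert.1 hmem with h | h
        · exact hus h
        · exact hns h
      · exact ⟨y, Finset.mem_insert_of_mem hy, r, hr, hur⟩
    have hfix : net.Cstep θ net.Vmax (net.Cinf θ net.Vmax) = net.Cinf θ net.Vmax :=
      net.Cstep_Cinf θ net.Vmax
    have hstep : u ∈ net.Cstep θ net.Vmax (net.Cinf θ net.Vmax) := by
      refine Finset.mem_union_right _ (Finset.mem_inter.2 ⟨?_, hvmax⟩)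
      rw [Phi, Finset.mem_filter]
      exact ⟨Finset.mem_univ _, hD, hsum2⟩
    rwa [hfix] at hstep

/-- Pointwise statement for strictly positive thresholds. -/
lemma pointwise (net : FriendNet V) (θ : V → ℝ) (hθ : ∀ v, 0 < θ v)
    (ht : net.t ∈ net.Cinf θ Finset.univ) : net.t ∈ net.Cinf θ net.Vmax := by
  have ht' : net.t ∈ net.Aseq θ (Fintype.card V) := ht
  refine net.main_lemma θ hθ (net.stp θ net.t) net.t le_rfl ⟨_, ht'⟩ net.t_ne_s
    SimpleGraph.Walk.nil ?_
  rw [SimpleGraph.Walk.support_nil]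
  exact List.isChain_singleton _

end FriendNet

namespace FriendNet

lemma null_bad : thetaMeasure V {θ : V → ℝ | ¬ ∀ v, 0 < θ v} = 0 := by
  have h1 : {θ : V → ℝ | ¬ ∀ v, 0 < θ v} = ⋃ v : V, {θ : V → ℝ | θ v ≤ 0} := by
    ext θ
    simp [not_lt]
  rw [h1]
  refine measure_iUnion_null fun v => ?_
  have h2 : {θ : V → ℝ | θ v ≤ 0} =
      Set.univ.pi (fun i => if i = v then Set.Iic (0 : ℝ) else Set.univ) := by
    ext θ
    simp only [Set.mem_setOf_eq, Set.mem_pi, Set.mem_univ, forall_true_left]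
    constructor
    · intro h i
      by_cases hi : i = v
      · subst hi; simp [h]
      · simp [hi]
    · intro h
      have := h v
      simpa using this
  rw [h2, thetaMeasure, Measure.pi_pi]
  refine Finset.prod_eq_zero (Finset.mem_univ v) ?_
  rw [if_pos rfl]
  rw [Measure.restrict_apply measurableSet_Iic]
  have h3 : Set.Iic (0 : ℝ) ∩ Set.Icc 0 1 = {0} := by
    ext x
    simp only [Set.mem_inter_iff, Set.mem_Iic, Set.mem_Icc, Set.mem_singleton_iff]
    constructor
    · rintro ⟨ha, hb, _⟩
      exact le_antisymm ha hb
    · rintro rfl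
      exact ⟨le_rfl, le_rfl, zero_le_one⟩
  rw [h3]
  exact measure_singleton 0

end FriendNet

theorem Vmax_achieves_pmax' (net : FriendNet V) :
    net.f net.Vmax = net.f Finset.univ ∧ net.f Finset.univ = net.pmax := by
  haveI h0 : IsProbabilityMeasure (volume.restrict (Set.Icc (0 : ℝ) 1)) :=
    ⟨by rw [Measure.restrict_apply_univ]; simp [Real.volume_Icc]⟩
  haveI hP : IsProbabilityMeasure (FriendNet.thetaMeasure V) := by
    unfold FriendNet.thetaMeasure
    infer_instance
  have hmono : ∀ I : Finset V,
      {θ : V → ℝ | net.t ∈ net.Cinf θ I} ⊆ {θ : V → ℝ | net.t ∈ net.Cinf θ Finset.univ} :=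
    fun I θ hθ => net.Cinf_mono θ (Finset.subset_univ I) hθ
  have hle : ∀ I : Finset V, net.f I ≤ net.f Finset.univ := fun I =>
    ENNReal.toReal_mono (measure_ne_top _ _) (measure_mono (hmono I))
  have hfeq : net.f net.Vmax = net.f Finset.univ := by
    unfold FriendNet.f
    congr 1
    apply le_antisymm
    · exact measure_mono (hmono _)
    · calc FriendNet.thetaMeasure V {θ : V → ℝ | net.t ∈ net.Cinf θ Finset.univ}
          ≤ FriendNet.thetaMeasure V ({θ : V → ℝ | net.t ∈ net.Cinf θ net.Vmax} ∪
              {θ : V → ℝ | ¬ ∀ v, 0 < θ v}) := by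
            refine measure_mono fun θ hθ' => ?_
            by_cases hpos : ∀ v, 0 < θ v
            · exact Or.inl (net.pointwise θ hpos hθ')
            · exact Or.inr hpos
        _ ≤ FriendNet.thetaMeasure V {θ : V → ℝ | net.t ∈ net.Cinf θ net.Vmax} +
              FriendNet.thetaMeasure V {θ : V → ℝ | ¬ ∀ v, 0 < θ v} := measure_union_le _ _
        _ = FriendNet.thetaMeasure V {θ : V → ℝ | net.t ∈ net.Cinf θ net.Vmax} := by
            rw [FriendNet.null_bad, add_zero]
  refine ⟨hfeq, ?_⟩
  unfold FriendNet.pmax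
  exact le_antisymm (le_ciSup (Set.Finite.bddAbove (Set.finite_range _)) Finset.univ)
    (ciSup_le hle)

/-- part of Lemma 8: inviting exactly `V_max` achieves the maximum
acceptance probability, `f(V_max) = f(V) = p_max`. -/
theorem Vmax_achieves_pmax (net : FriendNet V) :
    net.f net.Vmax = net.f Finset.univ ∧ net.f Finset.univ = net.pmax := by
  exact Vmax_achieves_pmax' net
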